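/- Suppose a, b : ℕ → ℝ are nonnegative, a(k) = (1/2)^(2^k − 1), and b satisfies b(0) ≤ 1 and b(k+1) ≤ 4·(a(k)·u₀)/ψ(2u₀) · b(k) with ψ(u)=1−4u+2u², u₀ = (16−√232)/16. Then b(k) ≤ a(k) for all k. -/
import Mathlib


noncomputable def psi (u : ℝ) : ℝ := 1 - 4 * u + 2 * u ^ 2

noncomputable def u₀ : ℝ := (16 - Real.sqrt 232) / 16

lemma u0_pos : 0 < u₀ := by
  have h : Real.sqrt 232 < 16 := by
    have : (232 : ℝ) < 16 ^ 2 := by norm_num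
    nlinarith [Real.sq_sqrt (show (0:ℝ) ≤ 232 by norm_num),
      Real.sqrt_nonneg (232 : ℝ)]
  unfold u₀; linarith

lemma psi_val : psi (2 * u₀) = 1 / 4 + 8 * u₀ := by
  have hs : Real.sqrt 232 ^ 2 = 232 := Real.sq_sqrt (by norm_num)
  unfold psi u₀
  nlinarith [hs]

/-- Recursive formulation of the Approximate Zero Theorem's induction:
if `a k = (1/2)^(2^k−1)`, `b` is nonnegative with `b 0 ≤ 1` and
`b (k+1) ≤ 4(a k · u₀)/ψ(2u₀) · b k`, then `b k ≤ a k` for all `k`. -/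
theorem stmt_13 (a b : ℕ → ℝ) (hb : ∀ k, 0 ≤ b k)
    (ha : ∀ k, a k = (1 / 2 : ℝ) ^ (2 ^ k - 1))
    (hb0 : b 0 ≤ 1)
    (hstep : ∀ k, b (k + 1) ≤ 4 * (a k * u₀) / psi (2 * u₀) * b k) :
    ∀ k, b k ≤ a k := by
  have hu := u0_pos
  have hpsi : psi (2 * u₀) = 1 / 4 + 8 * u₀ := psi_val
  have hpsipos : 0 < psi (2 * u₀) := by rw [hpsi]; linarith
  have hc : 4 * u₀ / psi (2 * u₀) ≤ 1 / 2 := by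
    rw [div_le_iff₀ hpsipos, hpsi]; linarith
  intro k
  induction k with
  | zero =>
    rw [ha 0]; simpa using hb0
  | succ k ih =>
    have hak : 0 < a k := by rw [ha k]; positivity
    have h1 : b (k + 1) ≤ 4 * (a k * u₀) / psi (2 * u₀) * b k := hstep k
    have h2 : 4 * (a k * u₀) / psi (2 * u₀) * b k
        ≤ 4 * (a k * u₀) / psi (2 * u₀) * a k := by
      apply mul_le_mul_of_nonneg_left ih
      positivity
    have h3 : 4 * (a k * u₀) / psi (2 * u₀) * a k ≤ 1 / 2 * (a k * a k) := by
      have : 4 * (a k * u₀) / psi (2 * u₀) = (4 * u₀ / psi (2 * u₀)) * a k := by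
        ring
      rw [this]
      nlinarith [hak.le, mul_pos hak hak]
    have hexp : 2 ^ (k + 1) - 1 = (2 ^ k - 1) + (2 ^ k - 1) + 1 := by
      have : 1 ≤ 2 ^ k := Nat.one_le_two_pow
      omega
    have h4 : a (k + 1) = 1 / 2 * (a k * a k) := by
      rw [ha (k + 1), ha k, hexp, pow_succ, pow_add]
      ring
    linarith
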